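/- Fix a negative token v' ≠ y and regard its hard-negative weight as a function of the temperature, W(t) = exp(p(v')/t) / Σ_{u ∈ V, u ≠ y} exp(p(u)/t) for t > 0. If p(v') > ( Σ_{u ≠ y} exp(p(u)/τ)·p(u) ) / ( Σ_{u ≠ y} exp(p(u)/τ) ), i.e. the score of v' exceeds the weight-averaged negative score at temperature τ, then the derivative of W at τ is strictly negative; hence decreasing the temperature strictly increases the weight placed on such hard negative samples. -/

import Mathlib

open Real Finset

/-- If the score of the fixed negative token `v' ≠ y` strictly exceeds the
weight-averaged negative score at temperature `τ`, then the derivative (in the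
temperature) of its hard-negative weight
`W t = exp(p v' / t) / ∑_{u ≠ y} exp(p u / t)` at `τ` is strictly negative. -/
theorem hard_negative_weight_deriv_neg
    {V : Type*} [Fintype V] [DecidableEq V] (hV : 1 < Fintype.card V)
    (p : V → ℝ) (y : V) (τ : ℝ) (hτ : 0 < τ) (v' : V) (hv' : v' ≠ y)
    (hhard :
      (∑ u ∈ Finset.univ.filter (· ≠ y), Real.exp (p u / τ) * p u) /
          (∑ u ∈ Finset.univ.filter (· ≠ y), Real.exp (p u / τ)) < p v') :
    deriv
      (fun t : ℝ =>
        Real.exp (p v' / t) / (∑ u ∈ Finset.univ.filter (· ≠ y), Real.exp (p u / t)))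
      τ < 0 := by
  classical
  set s : Finset V := Finset.univ.filter (· ≠ y) with hs
  have hv's : v' ∈ s := by simp [hs, hv']
  set D : ℝ := ∑ u ∈ s, Real.exp (p u / τ) with hD
  set S : ℝ := ∑ u ∈ s, Real.exp (p u / τ) * p u with hS
  have hDpos : 0 < D := Finset.sum_pos (fun u _ => Real.exp_pos _) ⟨v', hv's⟩
  -- derivative of each exp(p u / t)
  have hterm : ∀ u : V, HasDerivAt (fun t : ℝ => Real.exp (p u / t))
      (Real.exp (p u / τ) * (p u * (-(τ ^ 2)⁻¹))) τ := by
    intro u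
    have h1 : HasDerivAt (fun t : ℝ => p u / t) (p u * (-(τ ^ 2)⁻¹)) τ := by
      simpa [div_eq_mul_inv] using ((hasDerivAt_inv hτ.ne').const_mul (p u))
    exact h1.exp
  have hDsum : HasDerivAt (fun t : ℝ => ∑ u ∈ s, Real.exp (p u / t))
      (∑ u ∈ s, Real.exp (p u / τ) * (p u * (-(τ ^ 2)⁻¹))) τ :=
    HasDerivAt.fun_sum fun u _ => hterm u
  have hderiv : HasDerivAt
      (fun t : ℝ => Real.exp (p v' / t) / (∑ u ∈ s, Real.exp (p u / t)))
      ((Real.exp (p v' / τ) * (p v' * (-(τ ^ 2)⁻¹)) * D -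
        Real.exp (p v' / τ) * (∑ u ∈ s, Real.exp (p u / τ) * (p u * (-(τ ^ 2)⁻¹)))) / D ^ 2)
      τ := (hterm v').div hDsum hDpos.ne'
  rw [hderiv.deriv]
  have hsum : (∑ u ∈ s, Real.exp (p u / τ) * (p u * (-(τ ^ 2)⁻¹)))
      = S * (-(τ ^ 2)⁻¹) := by
    rw [hS, Finset.sum_mul]
    exact Finset.sum_congr rfl fun u _ => by ring
  rw [hsum]
  have hSlt : S < p v' * D := by
    have := (div_lt_iff₀ hDpos).mp hhard
    linarith
  have hE : 0 < Real.exp (p v' / τ) := Real.exp_pos _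
  have hτ2 : 0 < (τ ^ 2)⁻¹ := by positivity
  have hnum : Real.exp (p v' / τ) * (p v' * (-(τ ^ 2)⁻¹)) * D -
      Real.exp (p v' / τ) * (S * (-(τ ^ 2)⁻¹)) < 0 := by
    have : Real.exp (p v' / τ) * (p v' * (-(τ ^ 2)⁻¹)) * D -
        Real.exp (p v' / τ) * (S * (-(τ ^ 2)⁻¹))
        = Real.exp (p v' / τ) * (τ ^ 2)⁻¹ * (S - p v' * D) := by ring
    rw [this]
    exact mul_neg_of_pos_of_neg (by positivity) (by linarith)
  exact div_neg_of_neg_of_pos hnum (by positivity)
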